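/- Let f : ℝ → ℝ be a nonnegative measurable probability density (∫ f = 1) with mean μ = ∫ x f(x) dx and variance σ² = ∫ (x−μ)² f(x) dx, where 0 < σ² < ∞, and suppose f·log f is integrable. Then the differential entropy of f satisfies −∫ f(x) log f(x) dx ≤ (1/2) log(2π e σ²), and equality holds for the Gaussian density g(x) = (2πσ²)^{−1/2} exp(−(x−μ)²/(2σ²)). That is, among all densities with given mean and variance, the normal density maximizes the entropy. -/

import Mathlib

open MeasureTheory Real

/-- The Gaussian density with mean `μ` and variance `σ²`. -/
noncomputable def gaussPDF (μ σ2 : ℝ) (x : ℝ) : ℝ :=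
  (Real.sqrt (2 * π * σ2))⁻¹ * Real.exp (-(x - μ) ^ 2 / (2 * σ2))

lemma integrable_sq_mul_exp {b : ℝ} (hb : 0 < b) :
    Integrable fun x : ℝ => x ^ 2 * Real.exp (-b * x ^ 2) := by
  have h := integrable_rpow_mul_exp_neg_mul_sq hb (s := (2 : ℝ)) (by norm_num)
  have : ∀ x : ℝ, x ^ (2 : ℝ) = x ^ 2 := fun x => by
    rw [show ((2:ℝ)) = ((2:ℕ):ℝ) by norm_num, Real.rpow_natCast]
  simpa [this] using h

lemma integral_sq_mul_exp {b : ℝ} (hb : 0 < b) :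
    ∫ x : ℝ, x ^ 2 * Real.exp (-b * x ^ 2) = (2 * b)⁻¹ * Real.sqrt (π / b) := by
  have hb' : (2 * b) ≠ 0 := by positivity
  have hv : ∀ x : ℝ, HasDerivAt (fun y : ℝ => -(2 * b)⁻¹ * Real.exp (-b * y ^ 2))
      (x * Real.exp (-b * x ^ 2)) x := by
    intro x
    have h1 : HasDerivAt (fun y : ℝ => -b * y ^ 2) (-b * (2 * x ^ 1)) x :=
      (hasDerivAt_pow 2 x).const_mul (-b)
    have h2 := (h1.exp).const_mul (-(2 * b)⁻¹)
    convert h2 using 1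
    · rfl
    · rfl
    field_simp
  have hu : ∀ x : ℝ, HasDerivAt (fun y : ℝ => y) (1 : ℝ) x := fun x => hasDerivAt_id x
  have huv' : Integrable ((fun y : ℝ => y) * fun x => x * Real.exp (-b * x ^ 2)) := by
    have := integrable_sq_mul_exp hb
    apply this.congr
    filter_upwards with x
    simp [Pi.mul_apply]; ring
  have hu'v : Integrable ((fun _ : ℝ => (1:ℝ)) * fun y : ℝ => -(2 * b)⁻¹ * Real.exp (-b * y ^ 2)) := by
    have := (integrable_exp_neg_mul_sq hb).const_mul (-(2 * b)⁻¹)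
    apply this.congr
    filter_upwards with x
    simp [Pi.mul_apply]
  have huv : Integrable ((fun y : ℝ => y) * fun y : ℝ => -(2 * b)⁻¹ * Real.exp (-b * y ^ 2)) := by
    have := (integrable_mul_exp_neg_mul_sq hb).const_mul (-(2 * b)⁻¹)
    apply this.congr
    filter_upwards with x
    simp [Pi.mul_apply]; ring
  have key := MeasureTheory.integral_mul_deriv_eq_deriv_mul_of_integrable (fun x _ => hu x) (fun x _ => hv x) huv' hu'v huv
  have e1 : ∫ x : ℝ, x * (x * Real.exp (-b * x ^ 2)) = ∫ x : ℝ, x ^ 2 * Real.exp (-b * x ^ 2) := by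
    congr 1; funext x; ring
  rw [e1] at key
  rw [key]
  simp only [one_mul, MeasureTheory.integral_const_mul, integral_gaussian]
  ring

section GaussFacts

variable {μ σ2 : ℝ}

lemma gaussPDF_eq (hσ : 0 < σ2) (x : ℝ) :
    gaussPDF μ σ2 x =
      (Real.sqrt (2 * π * σ2))⁻¹ * Real.exp (-(2 * σ2)⁻¹ * (x - μ) ^ 2) := by
  unfold gaussPDF
  congr 1
  congr 1
  field_simp

lemma sqrt_pi_div (hσ : 0 < σ2) :
    Real.sqrt (π / (2 * σ2)⁻¹) = Real.sqrt (2 * π * σ2) := by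
  congr 1
  field_simp

lemma gaussPDF_pos (hσ : 0 < σ2) (x : ℝ) : 0 < gaussPDF μ σ2 x := by
  unfold gaussPDF
  have h2 : 0 < 2 * π * σ2 := by positivity
  positivity

lemma gaussPDF_integrable (hσ : 0 < σ2) : Integrable (gaussPDF μ σ2) := by
  have hb : 0 < (2 * σ2)⁻¹ := by positivity
  have h := ((integrable_exp_neg_mul_sq hb).comp_sub_right μ).const_mul
    (Real.sqrt (2 * π * σ2))⁻¹
  apply h.congr
  filter_upwards with x
  rw [gaussPDF_eq hσ]

lemma gaussPDF_integral_one (hσ : 0 < σ2) : ∫ x, gaussPDF μ σ2 x = 1 := by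
  have hb : 0 < (2 * σ2)⁻¹ := by positivity
  have hsp : 0 < Real.sqrt (2 * π * σ2) := by
    apply Real.sqrt_pos.2; positivity
  calc ∫ x, gaussPDF μ σ2 x
      = ∫ x, (Real.sqrt (2 * π * σ2))⁻¹ * Real.exp (-(2 * σ2)⁻¹ * (x - μ) ^ 2) := by
        congr 1; funext x; rw [gaussPDF_eq hσ]
    _ = (Real.sqrt (2 * π * σ2))⁻¹ * ∫ x, Real.exp (-(2 * σ2)⁻¹ * (x - μ) ^ 2) :=
        MeasureTheory.integral_const_mul _ _
    _ = (Real.sqrt (2 * π * σ2))⁻¹ * ∫ x, Real.exp (-(2 * σ2)⁻¹ * x ^ 2) := by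
        rw [integral_sub_right_eq_self (μ := volume)
          (fun y => Real.exp (-(2 * σ2)⁻¹ * y ^ 2)) μ]
    _ = (Real.sqrt (2 * π * σ2))⁻¹ * Real.sqrt (π / (2 * σ2)⁻¹) := by
        rw [integral_gaussian]
    _ = 1 := by rw [sqrt_pi_div hσ]; exact inv_mul_cancel₀ hsp.ne'

lemma gaussPDF_var_integrable (hσ : 0 < σ2) :
    Integrable (fun x => (x - μ) ^ 2 * gaussPDF μ σ2 x) := by
  have hb : 0 < (2 * σ2)⁻¹ := by positivity
  have h := (((integrable_sq_mul_exp hb).comp_sub_right μ)).const_mul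
    (Real.sqrt (2 * π * σ2))⁻¹
  apply h.congr
  filter_upwards with x
  rw [gaussPDF_eq hσ]
  ring

lemma gaussPDF_var_integral (hσ : 0 < σ2) :
    ∫ x, (x - μ) ^ 2 * gaussPDF μ σ2 x = σ2 := by
  have hb : 0 < (2 * σ2)⁻¹ := by positivity
  have hsp : 0 < Real.sqrt (2 * π * σ2) := by
    apply Real.sqrt_pos.2; positivity
  calc ∫ x, (x - μ) ^ 2 * gaussPDF μ σ2 x
      = ∫ x, (Real.sqrt (2 * π * σ2))⁻¹ *
          ((x - μ) ^ 2 * Real.exp (-(2 * σ2)⁻¹ * (x - μ) ^ 2)) := by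
        congr 1; funext x; rw [gaussPDF_eq hσ]; ring
    _ = (Real.sqrt (2 * π * σ2))⁻¹ *
          ∫ x, (x - μ) ^ 2 * Real.exp (-(2 * σ2)⁻¹ * (x - μ) ^ 2) :=
        MeasureTheory.integral_const_mul _ _
    _ = (Real.sqrt (2 * π * σ2))⁻¹ * ∫ x, x ^ 2 * Real.exp (-(2 * σ2)⁻¹ * x ^ 2) := by
        rw [integral_sub_right_eq_self (μ := volume)
          (fun y => y ^ 2 * Real.exp (-(2 * σ2)⁻¹ * y ^ 2)) μ]
    _ = (Real.sqrt (2 * π * σ2))⁻¹ * ((2 * (2 * σ2)⁻¹)⁻¹ * Real.sqrt (π / (2 * σ2)⁻¹)) := by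
        rw [integral_sq_mul_exp hb]
    _ = σ2 := by
        rw [sqrt_pi_div hσ]
        rw [show (2 * (2 * σ2)⁻¹)⁻¹ = σ2 by field_simp]
        field_simp [hsp.ne']

lemma gaussPDF_log (hσ : 0 < σ2) (x : ℝ) :
    Real.log (gaussPDF μ σ2 x) =
      -((1:ℝ)/2) * Real.log (2 * π * σ2) - (x - μ) ^ 2 / (2 * σ2) := by
  have hsp : 0 < Real.sqrt (2 * π * σ2) := by
    apply Real.sqrt_pos.2; positivity
  unfold gaussPDF
  rw [Real.log_mul (by positivity) (Real.exp_ne_zero _), Real.log_inv, Real.log_exp,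
    Real.log_sqrt (by positivity)]
  ring

/-- Cross-entropy of any density with mean μ, variance σ2 against the Gaussian. -/
lemma cross_entropy (hσ : 0 < σ2) (f : ℝ → ℝ)
    (hint : Integrable f) (hprob : ∫ x, f x = 1)
    (hvarInt : Integrable fun x => (x - μ) ^ 2 * f x)
    (hvar : ∫ x, (x - μ) ^ 2 * f x = σ2) :
    (Integrable fun x => f x * Real.log (gaussPDF μ σ2 x)) ∧
      ∫ x, f x * Real.log (gaussPDF μ σ2 x) =
        -((1:ℝ)/2) * Real.log (2 * π * σ2) - 1 / 2 := by
  set L : ℝ := -((1:ℝ)/2) * Real.log (2 * π * σ2) with hL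
  have heq : ∀ x, f x * Real.log (gaussPDF μ σ2 x)
      = L * f x - (2 * σ2)⁻¹ * ((x - μ) ^ 2 * f x) := by
    intro x
    rw [gaussPDF_log hσ]
    field_simp
    ring
  have hI : Integrable fun x => L * f x - (2 * σ2)⁻¹ * ((x - μ) ^ 2 * f x) :=
    (hint.const_mul L).sub (hvarInt.const_mul _)
  constructor
  · exact hI.congr (by filter_upwards with x; rw [heq])
  · calc ∫ x, f x * Real.log (gaussPDF μ σ2 x)
        = ∫ x, (L * f x - (2 * σ2)⁻¹ * ((x - μ) ^ 2 * f x)) := by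
          congr 1; funext x; rw [heq]
      _ = (∫ x, L * f x) - ∫ x, (2 * σ2)⁻¹ * ((x - μ) ^ 2 * f x) :=
          MeasureTheory.integral_sub (hint.const_mul L) (hvarInt.const_mul _)
      _ = L * (∫ x, f x) - (2 * σ2)⁻¹ * ∫ x, (x - μ) ^ 2 * f x := by
          rw [MeasureTheory.integral_const_mul, MeasureTheory.integral_const_mul]
      _ = L - 1/2 := by
          rw [hprob, hvar]; field_simp
      _ = -((1:ℝ)/2) * Real.log (2 * π * σ2) - 1 / 2 := rfl

end GaussFacts

theorem gaussian_maximizes_entropy (f : ℝ → ℝ) (μ σ2 : ℝ)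
    (hmeas : Measurable f) (hnonneg : ∀ x, 0 ≤ f x)
    (hint : Integrable f) (hprob : ∫ x, f x = 1)
    (hmeanInt : Integrable fun x => x * f x) (hmean : ∫ x, x * f x = μ)
    (hvarInt : Integrable fun x => (x - μ) ^ 2 * f x)
    (hvar : ∫ x, (x - μ) ^ 2 * f x = σ2) (hσ : 0 < σ2)
    (hent : Integrable fun x => f x * Real.log (f x)) :
    (-∫ x, f x * Real.log (f x)) ≤ (1 / 2) * Real.log (2 * π * Real.exp 1 * σ2) ∧
      (-∫ x, gaussPDF μ σ2 x * Real.log (gaussPDF μ σ2 x)) =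
        (1 / 2) * Real.log (2 * π * Real.exp 1 * σ2) := by
  have hRHS : (1 / 2 : ℝ) * Real.log (2 * π * Real.exp 1 * σ2)
      = (1/2) * Real.log (2 * π * σ2) + 1/2 := by
    rw [show 2 * π * Real.exp 1 * σ2 = (2 * π * σ2) * Real.exp 1 by ring,
      Real.log_mul (by positivity) (Real.exp_ne_zero _), Real.log_exp]
    ring
  obtain ⟨hcrossInt, hcross⟩ := cross_entropy hσ f hint hprob hvarInt hvar
  constructor
  · -- Gibbs inequality
    have hpt : ∀ x, f x * Real.log (gaussPDF μ σ2 x) - f x * Real.log (f x)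
        ≤ gaussPDF μ σ2 x - f x := by
      intro x
      have hg := gaussPDF_pos (μ := μ) hσ x
      rcases eq_or_lt_of_le (hnonneg x) with h0 | hf
      · rw [← h0]; simpa using hg.le
      · have h1 : Real.log (gaussPDF μ σ2 x / f x) ≤ gaussPDF μ σ2 x / f x - 1 :=
          Real.log_le_sub_one_of_pos (by positivity)
        have h2 : Real.log (gaussPDF μ σ2 x) - Real.log (f x)
            = Real.log (gaussPDF μ σ2 x / f x) := (Real.log_div hg.ne' hf.ne').symm
        calc f x * Real.log (gaussPDF μ σ2 x) - f x * Real.log (f x)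
            = f x * Real.log (gaussPDF μ σ2 x / f x) := by rw [← h2]; ring
          _ ≤ f x * (gaussPDF μ σ2 x / f x - 1) :=
              mul_le_mul_of_nonneg_left h1 hf.le
          _ = gaussPDF μ σ2 x - f x := by field_simp
    have hmono : ∫ x, (f x * Real.log (gaussPDF μ σ2 x) - f x * Real.log (f x))
        ≤ ∫ x, (gaussPDF μ σ2 x - f x) :=
      MeasureTheory.integral_mono (hcrossInt.sub hent)
        ((gaussPDF_integrable hσ).sub hint) hpt
    rw [MeasureTheory.integral_sub hcrossInt hent,
      MeasureTheory.integral_sub (gaussPDF_integrable hσ) hint,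
      gaussPDF_integral_one hσ, hprob, hcross] at hmono
    rw [hRHS]
    linarith
  · -- equality for the Gaussian
    obtain ⟨_, hg⟩ := cross_entropy hσ (gaussPDF μ σ2) (gaussPDF_integrable hσ)
      (gaussPDF_integral_one hσ) (gaussPDF_var_integrable hσ) (gaussPDF_var_integral hσ)
    rw [hg, hRHS]
    ring
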